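/- Let A be an n×n Hermitian matrix with distinct eigenvalues a_1 > ⋯ > a_n and orthonormal eigenvectors, x a vector, b > 0, and M = A + b x x†. If x has components u_i in the eigenbasis of A with all |u_i|² > 0, then the eigenvalues λ of M distinct from the a_i are precisely the solutions of 1 + b Σ_{i=1}^n |u_i|²/(a_i - λ) = 0, and they strictly interlace: λ_1 > a_1 > λ_2 > a_2 > ⋯ > λ_n > a_n where λ_1, …, λ_n are the eigenvalues of M. -/

import Mathlib

open Matrix

/-- The rank-one additive perturbation `M = A + b x x†` of a Hermitian matrix `A`
(written in the eigenbasis of `A`, so `A = diag(a_1,…,a_n)` with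
`a_1 > ⋯ > a_n`, and `x` has components `u_i`). -/
noncomputable def rankOnePert (n : ℕ) (a : Fin n → ℝ) (u : Fin n → ℂ) (b : ℝ) :
    Matrix (Fin n) (Fin n) ℂ :=
  Matrix.diagonal (fun i => (a i : ℂ)) + (b : ℂ) • Matrix.vecMulVec u (star u)

lemma det_formula (n : ℕ) (a : Fin n → ℝ) (u : Fin n → ℂ) (b : ℝ) (lam : ℝ)
    (hl : ∀ i, lam ≠ a i) :
    ((rankOnePert n a u b) - (lam : ℂ) • 1).det =
      (∏ i, ((a i : ℂ) - lam)) *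
        ((1 + b * ∑ i, Complex.normSq (u i) / (a i - lam) : ℝ) : ℂ) := by
  have hd : ∀ i, ((a i : ℂ) - lam) ≠ 0 := by
    intro i h
    apply hl i
    have := sub_eq_zero.mp h
    exact_mod_cast this.symm
  have hM : (rankOnePert n a u b) - (lam : ℂ) • 1 =
      Matrix.diagonal (fun i => (a i : ℂ) - lam) +
        replicateCol (Fin 1) ((b : ℂ) • u) * replicateRow (Fin 1) (star u) := by
    rw [rankOnePert]; erw [← vecMulVec_eq (Fin 1)]
    ext i j
    by_cases h : i = j <;>
      simp [vecMulVec, Matrix.diagonal, Matrix.one_apply, h, mul_comm, mul_assoc, mul_left_comm,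
        sub_eq_add_neg, add_comm, add_assoc, add_left_comm]
  rw [hM]
  have hdet : IsUnit (Matrix.diagonal (fun i => (a i : ℂ) - lam)).det := by
    rw [Matrix.det_diagonal]
    exact (Finset.prod_ne_zero_iff.mpr (fun i _ => hd i)).isUnit
  erw [Matrix.det_add_replicateCol_mul_replicateRow (ι := Fin 1) hdet]
  rw [Matrix.det_diagonal]
  congr 1
  simp only [Matrix.det_unique]
  have hinv : (Matrix.diagonal (fun i => (a i : ℂ) - lam))⁻¹ =
      Matrix.diagonal (fun i => ((a i : ℂ) - lam)⁻¹) := by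
    apply Matrix.inv_eq_right_inv
    rw [Matrix.diagonal_mul_diagonal]
    convert Matrix.diagonal_one
    exact mul_inv_cancel₀ (hd _)
  rw [hinv]
  simp only [Matrix.add_apply, Matrix.one_apply_eq, Matrix.mul_apply, Matrix.replicateRow_apply,
    Matrix.replicateCol_apply, Matrix.diagonal_apply, mul_ite, mul_zero, ite_mul, zero_mul,
    Finset.sum_ite_eq, Finset.sum_ite_eq', Finset.mem_univ, if_true, Complex.star_def,
    Finset.sum_singleton, Pi.smul_apply, Pi.star_apply, smul_eq_mul]
  push_cast
  congr 1
  rw [Finset.mul_sum]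
  apply Finset.sum_congr rfl
  intro i _
  have h2 : (starRingEnd ℂ) (u i) * u i = (Complex.normSq (u i) : ℂ) := by
    rw [mul_comm]; exact Complex.mul_conj (u i)
  linear_combination (b : ℂ) / ((a i : ℂ) - lam) * h2

open Filter Topology Set

section Analysis

variable {n : ℕ} (a : Fin n → ℝ) (c : Fin n → ℝ) (b : ℝ)

noncomputable def Ffun : ℝ → ℝ := fun t => 1 + b * ∑ i, c i / (a i - t)

lemma Ffun_continuousAt {t : ℝ} (ht : ∀ i, a i ≠ t) : ContinuousAt (Ffun a c b) t := by
  apply ContinuousAt.add continuousAt_const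
  apply ContinuousAt.mul continuousAt_const
  apply tendsto_finset_sum
  intro i _
  exact ContinuousAt.div continuousAt_const (continuousAt_const.sub continuousAt_id)
    (sub_ne_zero.mpr (ht i))

lemma term_above (co : ℝ) (hc : 0 < co) (s : ℝ) :
    Tendsto (fun t => co / (s - t)) (𝓝[>] s) atBot := by
  have h1 : Tendsto (fun t => t - s) (𝓝[>] s) (𝓝[>] 0) := by
    rw [tendsto_nhdsWithin_iff]
    constructor
    · have : ContinuousAt (fun t => t - s) s := continuousAt_id.sub continuousAt_const
      simpa using this.mono_left nhdsWithin_le_nhds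
    · filter_upwards [self_mem_nhdsWithin] with t ht
      exact sub_pos.mpr (mem_Ioi.mp ht)
  have h2 : Tendsto (fun t => co * (t - s)⁻¹) (𝓝[>] s) atTop :=
    (h1.inv_tendsto_nhdsGT_zero).const_mul_atTop hc
  have h3 := tendsto_neg_atTop_atBot.comp h2
  refine h3.congr fun t => ?_
  simp only [Function.comp]
  rw [div_eq_mul_inv, show s - t = -(t - s) by ring, inv_neg, mul_neg]

lemma term_below (co : ℝ) (hc : 0 < co) (s : ℝ) :
    Tendsto (fun t => co / (s - t)) (𝓝[<] s) atTop := by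
  have h1 : Tendsto (fun t => s - t) (𝓝[<] s) (𝓝[>] 0) := by
    rw [tendsto_nhdsWithin_iff]
    constructor
    · have : ContinuousAt (fun t => s - t) s := continuousAt_const.sub continuousAt_id
      simpa using this.mono_left nhdsWithin_le_nhds
    · filter_upwards [self_mem_nhdsWithin] with t ht
      exact sub_pos.mpr (mem_Iio.mp ht)
  have h2 : Tendsto (fun t => co * (s - t)⁻¹) (𝓝[<] s) atTop :=
    (h1.inv_tendsto_nhdsGT_zero).const_mul_atTop hc
  refine h2.congr fun t => ?_
  rw [div_eq_mul_inv]

lemma Ffun_rest (k : Fin n) (hinj : ∀ i, i ≠ k → a i ≠ a k) :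
    ∃ L, Tendsto (fun t => 1 + b * ∑ i ∈ Finset.univ.erase k, c i / (a i - t)) (𝓝 (a k)) (𝓝 L) := by
  have h : ContinuousAt (fun t => 1 + b * ∑ i ∈ Finset.univ.erase k, c i / (a i - t)) (a k) := by
    apply ContinuousAt.add continuousAt_const
    apply ContinuousAt.mul continuousAt_const
    apply tendsto_finset_sum
    intro i hi
    exact ContinuousAt.div continuousAt_const (continuousAt_const.sub continuousAt_id)
      (sub_ne_zero.mpr (hinj i (Finset.mem_erase.mp hi).1))
  exact ⟨_, h⟩

lemma Ffun_split (hb : 0 < b) (k : Fin n) :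
    ∀ t, Ffun a c b t =
      (1 + b * ∑ i ∈ Finset.univ.erase k, c i / (a i - t)) + b * (c k / (a k - t)) := by
  intro t
  rw [Ffun, ← Finset.add_sum_erase _ _ (Finset.mem_univ k)]
  ring

lemma Ffun_above (hb : 0 < b) (k : Fin n) (hck : 0 < c k) (hinj : ∀ i, i ≠ k → a i ≠ a k) :
    Tendsto (Ffun a c b) (𝓝[>] (a k)) atBot := by
  obtain ⟨L, hL⟩ := Ffun_rest a c b k hinj
  have h2 : Tendsto (fun t => b * (c k / (a k - t))) (𝓝[>] (a k)) atBot :=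
    Filter.Tendsto.pos_mul_atBot hb tendsto_const_nhds (term_above (c k) hck (a k))
  have h1 : ∀ᶠ t in 𝓝[>] (a k),
      (1 + b * ∑ i ∈ Finset.univ.erase k, c i / (a i - t)) ≤ L + 1 :=
    (hL.mono_left nhdsWithin_le_nhds).eventually (eventually_le_nhds (lt_add_one L))
  exact (tendsto_atBot_add_left_of_ge' _ (L + 1) h1 h2).congr
    (fun t => (Ffun_split a c b hb k t).symm)

lemma Ffun_below (hb : 0 < b) (k : Fin n) (hck : 0 < c k) (hinj : ∀ i, i ≠ k → a i ≠ a k) :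
    Tendsto (Ffun a c b) (𝓝[<] (a k)) atTop := by
  obtain ⟨L, hL⟩ := Ffun_rest a c b k hinj
  have h2 : Tendsto (fun t => b * (c k / (a k - t))) (𝓝[<] (a k)) atTop :=
    Filter.Tendsto.pos_mul_atTop hb tendsto_const_nhds (term_below (c k) hck (a k))
  have h1 : ∀ᶠ t in 𝓝[<] (a k),
      L - 1 ≤ (1 + b * ∑ i ∈ Finset.univ.erase k, c i / (a i - t)) :=
    (hL.mono_left nhdsWithin_le_nhds).eventually (eventually_ge_nhds (sub_one_lt L))
  exact (tendsto_atTop_add_left_of_le' _ (L - 1) h1 h2).congr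
    (fun t => (Ffun_split a c b hb k t).symm)

lemma Ffun_atTop : Tendsto (Ffun a c b) atTop (𝓝 1) := by
  have h : ∀ i : Fin n, Tendsto (fun t => c i / (a i - t)) atTop (𝓝 0) := by
    intro i
    have h1 : Tendsto (fun t : ℝ => t - a i) atTop atTop :=
      tendsto_atTop_add_const_right _ _ tendsto_id
    have h2 := (Filter.Tendsto.const_div_atTop h1 (c i)).neg
    rw [neg_zero] at h2
    refine h2.congr fun t => ?_
    rw [show a i - t = -(t - a i) by ring, div_neg]
  have hsum : Tendsto (fun t => ∑ i, c i / (a i - t)) atTop (𝓝 0) := by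
    have := tendsto_finset_sum (Finset.univ : Finset (Fin n)) (fun i _ => h i)
    simpa using this
  have := (tendsto_const_nhds (x := (1:ℝ))).add ((tendsto_const_nhds (x := b)).mul hsum)
  simp at this
  exact this

end Analysis

/-- For `A` Hermitian with simple spectrum `a_1 > ⋯ > a_n`, `b > 0` and `x` with
all components `u_i ≠ 0` in the eigenbasis, the eigenvalues of `M = A + b x x†`
distinct from the `a_i` are precisely the solutions of
`1 + b Σ_i |u_i|²/(a_i - λ) = 0`, and the eigenvalues `λ_1 > ⋯ > λ_n` of `M`
strictly interlace: `λ_1 > a_1 > λ_2 > a_2 > ⋯ > λ_n > a_n`. -/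
theorem stmt16 (n : ℕ) (a : Fin n → ℝ) (ha : StrictAnti a)
    (u : Fin n → ℂ) (hu : ∀ i, 0 < Complex.normSq (u i)) (b : ℝ) (hb : 0 < b) :
    (∀ lam : ℝ, (∀ i, lam ≠ a i) →
      (((rankOnePert n a u b) - (lam : ℂ) • 1).det = 0 ↔
        1 + b * ∑ i, Complex.normSq (u i) / (a i - lam) = 0)) ∧
    ∃ l : Fin n → ℝ, StrictAnti l ∧ (∀ i, a i < l i) ∧
      (∀ i : Fin n, ∀ h : (i : ℕ) + 1 < n, l ⟨(i : ℕ) + 1, h⟩ < a i) ∧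
      ∀ i, ((rankOnePert n a u b) - (l i : ℂ) • 1).det = 0 := by
  classical
  set c : Fin n → ℝ := fun i => Complex.normSq (u i) with hcdef
  have hF : ∀ lam : ℝ, (1 + b * ∑ i, Complex.normSq (u i) / (a i - lam)) = Ffun a c b lam :=
    fun lam => rfl
  constructor
  · intro lam hlam
    rw [det_formula n a u b lam hlam, mul_eq_zero]
    have hprod : (∏ i, ((a i : ℂ) - lam)) ≠ 0 := by
      apply Finset.prod_ne_zero_iff.mpr
      intro i _ h
      exact hlam i (by exact_mod_cast (sub_eq_zero.mp h).symm)
    rw [or_iff_right hprod]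
    exact Complex.ofReal_eq_zero
  · have hinj : ∀ k : Fin n, ∀ i, i ≠ k → a i ≠ a k := fun k i h => ha.injective.ne h
    have htop := Ffun_atTop a c b
    have hevpos : ∀ᶠ t in atTop, 0 < Ffun a c b t := htop.eventually (eventually_gt_nhds one_pos)
    have hevgt : ∀ᶠ t in atTop, ∀ i, a i < t :=
      eventually_all.mpr fun i => eventually_gt_atTop (a i)
    obtain ⟨T, hT1, hT2⟩ := (hevpos.and hevgt).exists
    have key : ∀ i : Fin n, ∃ l, Ffun a c b l = 0 ∧ a i < l ∧
        (0 < (i : ℕ) → l < a ⟨(i : ℕ) - 1, Nat.lt_of_le_of_lt (Nat.pred_le _) i.isLt⟩) := by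
      intro i
      have hbot := Ffun_above a c b hb i (hu i) (hinj i)
      have h1 : ∀ᶠ t in 𝓝[>] (a i), Ffun a c b t < 0 :=
        hbot.eventually (eventually_lt_atBot 0)
      by_cases hi : 0 < (i : ℕ)
      · set ip : Fin n := ⟨(i : ℕ) - 1, Nat.lt_of_le_of_lt (Nat.pred_le _) i.isLt⟩ with hipdef
        have hlt : ip < i := by rw [Fin.lt_def]; simp [hipdef]; omega
        have haa : a i < a ip := ha hlt
        have h2 : Ioo (a i) (a ip) ∈ 𝓝[>] (a i) := Ioo_mem_nhdsGT_of_mem ⟨le_refl _, haa⟩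
        obtain ⟨p, hp1, hp2⟩ := (h1.and (eventually_of_mem h2 fun x hx => hx)).exists
        have htt := Ffun_below a c b hb ip (hu ip) (hinj ip)
        have h3 : ∀ᶠ t in 𝓝[<] (a ip), 0 < Ffun a c b t :=
          htt.eventually (eventually_gt_atTop 0)
        have h4 : Ioo p (a ip) ∈ 𝓝[<] (a ip) := Ioo_mem_nhdsLT_of_mem ⟨hp2.2, le_refl _⟩
        obtain ⟨q, hq1, hq2⟩ := (h3.and (eventually_of_mem h4 fun x hx => hx)).exists
        have hcont : ContinuousOn (Ffun a c b) (Icc p q) := by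
          intro t ht
          apply (Ffun_continuousAt a c b ?_).continuousWithinAt
          intro j
          have ht1 : a i < t := lt_of_lt_of_le hp2.1 ht.1
          have ht2 : t < a ip := lt_of_le_of_lt ht.2 hq2.2
          rcases le_or_gt (i : ℕ) (j : ℕ) with h | h
          · exact ne_of_lt (lt_of_le_of_lt (ha.antitone (Fin.le_def.mpr h)) ht1)
          · have : (j : ℕ) ≤ (ip : ℕ) := by simp [hipdef]; omega
            exact ne_of_gt (lt_of_lt_of_le ht2 (ha.antitone (Fin.le_def.mpr this)))
        obtain ⟨l, hl, hFl⟩ :=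
          intermediate_value_Ioo (le_of_lt hq2.1) hcont (Set.mem_Ioo.mpr ⟨hp1, hq1⟩)
        exact ⟨l, hFl, lt_trans hp2.1 hl.1, fun _ => lt_trans hl.2 hq2.2⟩
      · have h0 : (i : ℕ) = 0 := Nat.eq_zero_of_not_pos hi
        have haiT : a i < T := hT2 i
        have h2 : Ioo (a i) T ∈ 𝓝[>] (a i) := Ioo_mem_nhdsGT_of_mem ⟨le_refl _, haiT⟩
        obtain ⟨p, hp1, hp2⟩ := (h1.and (eventually_of_mem h2 fun x hx => hx)).exists
        have hcont : ContinuousOn (Ffun a c b) (Icc p T) := by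
          intro t ht
          apply (Ffun_continuousAt a c b ?_).continuousWithinAt
          intro j
          have ht1 : a i < t := lt_of_lt_of_le hp2.1 ht.1
          have hij : i ≤ j := Fin.le_def.mpr (by omega)
          exact ne_of_lt (lt_of_le_of_lt (ha.antitone hij) ht1)
        obtain ⟨l, hl, hFl⟩ :=
          intermediate_value_Ioo (le_of_lt hp2.2) hcont (Set.mem_Ioo.mpr ⟨hp1, hT1⟩)
        exact ⟨l, hFl, lt_trans hp2.1 hl.1, fun h => absurd h hi⟩
    choose l hl0 hl1 hl2 using key
    have hne : ∀ i j, l i ≠ a j := by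
      intro i j hEq
      rcases le_or_gt (i : ℕ) (j : ℕ) with h | h
      · exact ne_of_gt (lt_of_le_of_lt (ha.antitone (Fin.le_def.mpr h)) (hl1 i)) hEq
      · have hi : 0 < (i : ℕ) := lt_of_le_of_lt (Nat.zero_le _) h
        have hj : (j : ℕ) ≤ (i : ℕ) - 1 := by omega
        have := lt_of_lt_of_le (hl2 i hi) (ha.antitone (Fin.le_def.mpr hj))
        exact ne_of_lt this hEq
    have hadj : ∀ (i : Fin n) (h : (i : ℕ) + 1 < n), l ⟨(i : ℕ) + 1, h⟩ < a i := by
      intro i h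
      have h2 := hl2 ⟨(i : ℕ) + 1, h⟩ (Nat.succ_pos _)
      simpa using h2
    have hanti : StrictAnti l := by
      cases n with
      | zero => intro x; exact x.elim0
      | succ m =>
        rw [Fin.strictAnti_iff_succ_lt]
        intro i
        have h1 : l i.succ < a i.castSucc := by
          have := hadj i.castSucc (by simpa using i.isLt)
          have he : (⟨((i.castSucc : Fin (m + 1)) : ℕ) + 1, by simpa using i.isLt⟩ :
              Fin (m + 1)) = i.succ := by ext; simp
          rwa [he] at this
        exact lt_trans h1 (hl1 i.castSucc)
    refine ⟨l, hanti, hl1, hadj, fun i => ?_⟩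
    rw [det_formula n a u b (l i) (fun j => hne i j)]
    have : (1 + b * ∑ j, Complex.normSq (u j) / (a j - l i)) = 0 := hl0 i
    rw [this]
    simp
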